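/- arXiv:1304.1404 — 3 statements merged into one kernel-verified Lean document; each statement's English description precedes it below -/
import Mathlib

section
/- Let B be a complete Boolean algebra with operations c_i, s^i_j satisfying the SA axioms, where each s^i_j preserves arbitrary meets, and define d_ij = inf { y ∈ B : s^i_j y = 1 }. Then for i ≠ j: d_ij · c_i(d_ij · x) ≤ x for all x ∈ B (axiom C7 holds). -/
/-- Under the SA axioms on a complete Boolean algebra, with the
substitutions preserving arbitrary meets, and `d i j := sInf {y | s i j y = ⊤}`,
for `i ≠ j`, axiom (C7) holds: `d i j ⊓ c i (d i j ⊓ x) ≤ x`. -/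
theorem stmt10 {B : Type*} [CompleteBooleanAlgebra B] {ι : Type*}
    (c : ι → B → B) (s : ι → ι → B → B)
    (hs_id : ∀ i x, s i i x = x)
    (hS1 : ∀ i x, x ≤ c i x)
    (hS2 : ∀ i x y, c i (x ⊔ y) = c i x ⊔ c i y)
    (hS3 : ∀ i j x, s i j (c i x) = c i x)
    (hS4 : ∀ i j x, i ≠ j → c i (s i j x) = s i j x)
    (hS5 : ∀ i j k m x, i ≠ k → i ≠ m → j ≠ k → j ≠ m →
      s i j (s k m x) = s k m (s i j x))
    (hS6sup : ∀ i j x y, s i j (x ⊔ y) = s i j x ⊔ s i j y)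
    (hS6compl : ∀ i j x, s i j (xᶜ) = (s i j x)ᶜ)
    (hS7 : ∀ i j k x, s k k (s j k x) = s k i (s j i x))
    (hS8 : ∀ i j m k x, k ≠ i → k ≠ j → k ≠ m → m ≠ i → m ≠ j →
      s k i (s i j (s j m (s m k (c k x)))) =
      s k m (s m i (s i j (s j k (c k x)))))
    (hsInf : ∀ (i j : ι) (Y : Set B), s i j (sInf Y) = ⨅ y ∈ Y, s i j y) :
    ∀ (i j : ι) (x : B), i ≠ j →
      sInf {y : B | s i j y = ⊤} ⊓ c i (sInf {y : B | s i j y = ⊤} ⊓ x) ≤ x := by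

  intro i j x hij
  set d := sInf {y : B | s i j y = ⊤} with hd
  -- c is monotone
  have cmono : ∀ (i : ι) (a b : B), a ≤ b → c i a ≤ c i b := by
    intro i a b hab
    have : c i b = c i a ⊔ c i b := by
      rw [← hS2, sup_eq_right.mpr hab]
    rw [this]; exact le_sup_left
  -- s i j is idempotent
  have sidem : ∀ y : B, s i j (s i j y) = s i j y := by
    intro y
    rw [← hS4 i j y hij, hS3, hS4 i j y hij]
  -- key: d ⊓ y ≤ s i j y
  have key : ∀ y : B, d ⊓ y ≤ s i j y := by
    intro y
    have hmem : (yᶜ ⊔ s i j y) ∈ {z : B | s i j z = ⊤} := by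
      simp only [Set.mem_setOf_eq, hS6sup, hS6compl, sidem, compl_sup_eq_top]
    have hle : d ≤ yᶜ ⊔ s i j y := sInf_le hmem
    calc d ⊓ y ≤ (yᶜ ⊔ s i j y) ⊓ y := inf_le_inf_right y hle
      _ = (yᶜ ⊓ y) ⊔ (s i j y ⊓ y) := inf_sup_right _ _ _
      _ ≤ s i j y := by simp
  -- hence c i (d ⊓ x) ≤ s i j x
  have h1 : c i (d ⊓ x) ≤ s i j x := by
    have := cmono i (d ⊓ x) (s i j x) (key x)
    rwa [hS4 i j x hij] at this
  have h2 : d ⊓ s i j x ≤ x := by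
    have h := key xᶜ
    rw [hS6compl] at h
    have hbot : d ⊓ s i j x ⊓ xᶜ = ⊥ := by
      have hle : d ⊓ s i j x ⊓ xᶜ ≤ s i j x ⊓ (s i j x)ᶜ :=
        le_inf (inf_le_left.trans inf_le_right)
          ((inf_le_inf_right xᶜ inf_le_left).trans h)
      rw [inf_compl_eq_bot] at hle; exact hle.antisymm bot_le
    calc d ⊓ s i j x = (d ⊓ s i j x) ⊓ (x ⊔ xᶜ) := by simp
      _ = (d ⊓ s i j x ⊓ x) ⊔ (d ⊓ s i j x ⊓ xᶜ) := inf_sup_left _ _ _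
      _ ≤ x ⊔ ⊥ := sup_le_sup inf_le_right (le_of_eq hbot)
      _ = x := sup_bot_eq x
  calc d ⊓ c i (d ⊓ x) ≤ d ⊓ s i j x := inf_le_inf_left d h1
    _ ≤ x := h2
end

section
/- Every transposition algebra TA_α embeds into the transposition reduct of a transposition equality algebra TEA_α. Concretely: if A ∈ TA_α, then its canonical (perfect) extension B (which exists since TA_α is axiomatized by positive equations and hence canonical) carries diagonal constants d_ij := inf { y ∈ B : s^i_j y = 1 } making B a TEA_α, and A embeds into the reduct of B omitting the diagonals. -/
/-- A transposition equality algebra `TEA`: a Boolean algebra with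
cylindrifications `c i`, substitutions `s i j` (for `s^i_j`), transpositions
`t i j` (for `s_{ij}`) and diagonal constants `d i j`, satisfying axioms
(Fe0)–(Fe11) of Ferenczi. The index set `ι` may be arbitrary (e.g. an ordinal `α`). -/
structure TEA (A : Type*) [BooleanAlgebra A] (ι : Type*) where
  c : ι → A → A
  s : ι → ι → A → A
  t : ι → ι → A → A
  d : ι → ι → A
  s_id : ∀ i x, s i i x = x
  t_id : ∀ i x, t i i x = x
  d_id : ∀ i, d i i = ⊤
  t_symm : ∀ i j x, t i j x = t j i x
  fe1 : ∀ i x, x ≤ c i x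
  fe2 : ∀ i x y, c i (x ⊔ y) = c i x ⊔ c i y
  fe3 : ∀ i j x, s i j (c i x) = c i x
  fe4 : ∀ i j x, i ≠ j → c i (s i j x) = s i j x
  fe5 : ∀ i j k m x, i ≠ k → i ≠ m → j ≠ k → j ≠ m →
    s i j (s k m x) = s k m (s i j x)
  fe6s_sup : ∀ i j x y, s i j (x ⊔ y) = s i j x ⊔ s i j y
  fe6s_compl : ∀ i j x, s i j (xᶜ) = (s i j x)ᶜ
  fe6t_sup : ∀ i j x y, t i j (x ⊔ y) = t i j x ⊔ t i j y
  fe6t_compl : ∀ i j x, t i j (xᶜ) = (t i j x)ᶜ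
  fe7 : ∀ i j x, t i j (t i j x) = x
  fe8 : ∀ i j k x, i ≠ j → j ≠ k → i ≠ k → t i j (t i k x) = t j k (t i j x)
  fe9 : ∀ i j x, t i j (s i j x) = s j i x
  fe10 : ∀ i j, s i j (d i j) = ⊤
  fe11 : ∀ i j x, x ⊓ d i j ≤ s i j x
/-- A transposition algebra `TA`: the diagonal-free version of `TEA`,
with axioms (F0)–(F9). -/
structure TA (A : Type*) [BooleanAlgebra A] (ι : Type*) where
  c : ι → A → A
  s : ι → ι → A → A
  t : ι → ι → A → A
  s_id : ∀ i x, s i i x = x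
  t_id : ∀ i x, t i i x = x
  t_symm : ∀ i j x, t i j x = t j i x
  f1 : ∀ i x, x ≤ c i x
  f2 : ∀ i x y, c i (x ⊔ y) = c i x ⊔ c i y
  f3 : ∀ i j x, s i j (c i x) = c i x
  f4 : ∀ i j x, i ≠ j → c i (s i j x) = s i j x
  f5 : ∀ i j k m x, i ≠ k → i ≠ m → j ≠ k → j ≠ m →
    s i j (s k m x) = s k m (s i j x)
  f6s_sup : ∀ i j x y, s i j (x ⊔ y) = s i j x ⊔ s i j y
  f6s_compl : ∀ i j x, s i j (xᶜ) = (s i j x)ᶜ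
  f6t_sup : ∀ i j x y, t i j (x ⊔ y) = t i j x ⊔ t i j y
  f6t_compl : ∀ i j x, t i j (xᶜ) = (t i j x)ᶜ
  f7 : ∀ i j x, t i j (t i j x) = x
  f8 : ∀ i j k x, i ≠ j → j ≠ k → i ≠ k → t i j (t i k x) = t j k (t i j x)
  f9 : ∀ i j x, t i j (s i j x) = s j i x

universe u v

namespace Stmt14Aux

variable {A : Type u} [BooleanAlgebra A]

/-- Ultrafilters of a Boolean algebra. -/
structure Ultra (A : Type u) [BooleanAlgebra A] : Type u where
  car : Set A
  upward : ∀ {x y : A}, x ∈ car → x ≤ y → y ∈ car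
  inf_mem : ∀ {x y : A}, x ∈ car → y ∈ car → x ⊓ y ∈ car
  compl_iff : ∀ x : A, xᶜ ∈ car ↔ x ∉ car

namespace Ultra

lemma ext' {U V : Ultra A} (h : U.car = V.car) : U = V := by
  cases U; cases V; cases h; rfl

lemma bot_not_mem (U : Ultra A) : ⊥ ∉ U.car := by
  intro h
  have ht : ⊤ ∈ U.car := U.upward h le_top
  have := (U.compl_iff ⊥).mp (by simpa using ht)
  exact this h

lemma sup_iff (U : Ultra A) (x y : A) : x ⊔ y ∈ U.car ↔ x ∈ U.car ∨ y ∈ U.car := by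
  constructor
  · intro h
    by_contra hc
    push_neg at hc
    have hx : xᶜ ∈ U.car := (U.compl_iff x).mpr hc.1
    have hy : yᶜ ∈ U.car := (U.compl_iff y).mpr hc.2
    have : (x ⊔ y)ᶜ ∈ U.car := by rw [compl_sup]; exact U.inf_mem hx hy
    exact (U.compl_iff _).mp this h
  · rintro (h | h)
    · exact U.upward h le_sup_left
    · exact U.upward h le_sup_right

end Ultra

/-- Existence of an ultrafilter containing `a` and disjoint from an ideal `I`. -/
lemma ultra_exists (I : Set A) (Ibot : ⊥ ∈ I)
    (Idown : ∀ x y : A, x ≤ y → y ∈ I → x ∈ I)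
    (Isup : ∀ x y : A, x ∈ I → y ∈ I → x ⊔ y ∈ I)
    (a : A) (ha : a ∉ I) :
    ∃ U : Ultra A, a ∈ U.car ∧ ∀ x ∈ U.car, x ∉ I := by
  classical
  set S : Set (Set A) := {F | a ∈ F ∧ (∀ x ∈ F, ∀ y : A, x ≤ y → y ∈ F) ∧
      (∀ x ∈ F, ∀ y ∈ F, x ⊓ y ∈ F) ∧ ∀ x ∈ F, x ∉ I} with hS
  have h0 : {x : A | a ≤ x} ∈ S := by
    refine ⟨le_refl a, fun x hx y hxy => le_trans hx hxy,
      fun x hx y hy => le_inf hx hy, fun x hx hxI => ha (Idown a x hx hxI)⟩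
  have hchainub : ∀ c ⊆ S, IsChain (· ⊆ ·) c → c.Nonempty →
      ∃ ub ∈ S, ∀ s ∈ c, s ⊆ ub := by
    intro c hcS hchain hcne
    refine ⟨⋃₀ c, ⟨?_, ?_, ?_, ?_⟩, fun s hs => Set.subset_sUnion_of_mem hs⟩
    · obtain ⟨F, hF⟩ := hcne; exact ⟨F, hF, (hcS hF).1⟩
    · rintro x ⟨F, hF, hxF⟩ y hxy; exact ⟨F, hF, (hcS hF).2.1 x hxF y hxy⟩
    · rintro x ⟨F, hF, hxF⟩ y ⟨G, hG, hyG⟩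
      rcases hchain.total hF hG with hFG | hGF
      · exact ⟨G, hG, (hcS hG).2.2.1 x (hFG hxF) y hyG⟩
      · exact ⟨F, hF, (hcS hF).2.2.1 x hxF y (hGF hyG)⟩
    · rintro x ⟨F, hF, hxF⟩; exact (hcS hF).2.2.2 x hxF
  obtain ⟨M, hM0, hMmax⟩ := zorn_subset_nonempty S hchainub _ h0
  obtain ⟨haM, hMup, hMinf, hMI⟩ := hMmax.1
  have hcompl : ∀ x : A, x ∉ M → xᶜ ∈ M := by
    intro x hx
    by_contra hxc
    have key : ∀ z : A, z ∉ M → ∃ u ∈ M, u ⊓ z ∈ I := by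
      intro z hz
      by_contra hcon
      push_neg at hcon
      have hGS : {w : A | ∃ u ∈ M, u ⊓ z ≤ w} ∈ S := by
        refine ⟨⟨a, haM, inf_le_left⟩, ?_, ?_, ?_⟩
        · rintro w ⟨u, hu, hle⟩ y hwy; exact ⟨u, hu, hle.trans hwy⟩
        · rintro w ⟨u, hu, h1⟩ w' ⟨u', hu', h2⟩
          exact ⟨u ⊓ u', hMinf u hu u' hu',
            le_inf ((inf_le_inf_right z inf_le_left).trans h1)
              ((inf_le_inf_right z inf_le_right).trans h2)⟩
        · rintro w ⟨u, hu, hle⟩ hwI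
          exact hcon u hu (Idown _ w hle hwI)
      have hsub : M ⊆ {w : A | ∃ u ∈ M, u ⊓ z ≤ w} := fun u hu => ⟨u, hu, inf_le_left⟩
      have hback : {w : A | ∃ u ∈ M, u ⊓ z ≤ w} ⊆ M := hMmax.2 hGS hsub
      have htop : (⊤ : A) ∈ M := hMup a haM ⊤ le_top
      exact hz (hback ⟨⊤, htop, inf_le_right⟩)
    obtain ⟨u, hu, huI⟩ := key x hx
    obtain ⟨u', hu', huI'⟩ := key xᶜ hxc
    have h1 : (u ⊓ u') ⊓ x ∈ I := Idown _ _ (inf_le_inf_right x inf_le_left) huI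
    have h2 : (u ⊓ u') ⊓ xᶜ ∈ I := Idown _ _ (inf_le_inf_right (xᶜ) inf_le_right) huI'
    have h3 : ((u ⊓ u') ⊓ x) ⊔ ((u ⊓ u') ⊓ xᶜ) ∈ I := Isup _ _ h1 h2
    have h4 : ((u ⊓ u') ⊓ x) ⊔ ((u ⊓ u') ⊓ xᶜ) = u ⊓ u' := by
      rw [← inf_sup_left, sup_compl_eq_top, inf_top_eq]
    exact hMI _ (hMinf u hu u' hu') (h4 ▸ h3)
  refine ⟨⟨M, fun hx hxy => hMup _ hx _ hxy, fun hx hy => hMinf _ hx _ hy, ?_⟩, haM, hMI⟩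
  intro x
  constructor
  · intro hxc hx
    exact hMI ⊥ (by simpa using hMinf _ hx _ hxc) Ibot
  · exact hcompl x

section Endo

variable {h : A → A}

lemma endo_top (hsup : ∀ x y : A, h (x ⊔ y) = h x ⊔ h y)
    (hcompl : ∀ x : A, h (xᶜ) = (h x)ᶜ) : h ⊤ = ⊤ := by
  have := hsup ⊥ (⊥ᶜ)
  rw [hcompl] at this
  simpa using this

lemma endo_bot (hsup : ∀ x y : A, h (x ⊔ y) = h x ⊔ h y)
    (hcompl : ∀ x : A, h (xᶜ) = (h x)ᶜ) : h ⊥ = ⊥ := by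
  rw [← compl_top, hcompl, endo_top hsup hcompl, compl_top]

lemma endo_inf (hsup : ∀ x y : A, h (x ⊔ y) = h x ⊔ h y)
    (hcompl : ∀ x : A, h (xᶜ) = (h x)ᶜ) (x y : A) : h (x ⊓ y) = h x ⊓ h y := by
  have hxy : x ⊓ y = (xᶜ ⊔ yᶜ)ᶜ := by simp
  rw [hxy, hcompl, hsup, hcompl, hcompl, compl_sup, compl_compl, compl_compl]

lemma endo_mono (hsup : ∀ x y : A, h (x ⊔ y) = h x ⊔ h y)
    (hcompl : ∀ x : A, h (xᶜ) = (h x)ᶜ) {x y : A} (hxy : x ≤ y) : h x ≤ h y := by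
  have : h x ⊔ h y = h y := by rw [← hsup, sup_eq_right.mpr hxy]
  exact le_sup_left.trans this.le

end Endo

/-- Lifting a Boolean endomorphism to a map on ultrafilters. -/
def UMap (h : A → A) (hsup : ∀ x y : A, h (x ⊔ y) = h x ⊔ h y)
    (hcompl : ∀ x : A, h (xᶜ) = (h x)ᶜ) (U : Ultra A) : Ultra A where
  car := {a | h a ∈ U.car}
  upward := fun hx hxy => U.upward hx (endo_mono hsup hcompl hxy)
  inf_mem := fun {x y} hx hy => by
    show h (x ⊓ y) ∈ U.car
    rw [endo_inf hsup hcompl]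
    exact U.inf_mem hx hy
  compl_iff := fun x => by
    show h (xᶜ) ∈ U.car ↔ h x ∉ U.car
    rw [hcompl]
    exact U.compl_iff (h x)


variable {ι : Type v}

/-- Derived TA facts. -/
lemma c_mono (T : TA A ι) (i : ι) {x y : A} (h : x ≤ y) : T.c i x ≤ T.c i y := by
  have h1 : T.c i y = T.c i x ⊔ T.c i y := by rw [← T.f2, sup_eq_right.mpr h]
  exact le_sup_left.trans h1.ge

lemma s_bot (T : TA A ι) (i j : ι) : T.s i j ⊥ = ⊥ :=
  endo_bot (T.f6s_sup i j) (T.f6s_compl i j)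

lemma c_bot (T : TA A ι) {i j : ι} (hij : i ≠ j) : T.c i ⊥ = ⊥ := by
  have := T.f4 i j ⊥ hij
  rwa [s_bot] at this

lemma s_idem (T : TA A ι) (i j : ι) (x : A) : T.s i j (T.s i j x) = T.s i j x := by
  by_cases hij : i = j
  · subst hij; rw [T.s_id, T.s_id]
  · conv_lhs => rw [← T.f4 i j x hij, T.f3, T.f4 i j x hij]

/-- The index-lifted ultrafilter space. -/
abbrev P (A : Type u) (ι : Type v) [BooleanAlgebra A] : Type (max u v) :=
  ULift.{v} (Ultra A)

lemma Pext {U V : P A ι} (h : ∀ a : A, a ∈ U.down.car ↔ a ∈ V.down.car) : U = V := by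
  have : U.down = V.down := Ultra.ext' (Set.ext h)
  cases U; cases V; cases this; rfl

def phiS (T : TA A ι) (i j : ι) (U : P A ι) : P A ι :=
  ⟨UMap (T.s i j) (T.f6s_sup i j) (T.f6s_compl i j) U.down⟩

def phiT (T : TA A ι) (i j : ι) (U : P A ι) : P A ι :=
  ⟨UMap (T.t i j) (T.f6t_sup i j) (T.f6t_compl i j) U.down⟩

lemma mem_phiS (T : TA A ι) (i j : ι) (a : A) (U : P A ι) :
    a ∈ (phiS T i j U).down.car ↔ T.s i j a ∈ U.down.car := Iff.rfl

lemma mem_phiT (T : TA A ι) (i j : ι) (a : A) (U : P A ι) :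
    a ∈ (phiT T i j U).down.car ↔ T.t i j a ∈ U.down.car := Iff.rfl

def cB (T : TA A ι) (i : ι) (S : Set (P A ι)) : Set (P A ι) :=
  {V | (∃ U ∈ S, ∀ a ∈ U.down.car, T.c i a ∈ V.down.car) ∨ T.c i ⊥ ∈ V.down.car}

def sB (T : TA A ι) (i j : ι) (S : Set (P A ι)) : Set (P A ι) := phiS T i j ⁻¹' S

def tB (T : TA A ι) (i j : ι) (S : Set (P A ι)) : Set (P A ι) := phiT T i j ⁻¹' S

def dB (T : TA A ι) (i j : ι) : Set (P A ι) := Set.range (phiS T i j)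

def eB (a : A) : Set (P A ι) := {U | a ∈ U.down.car}

lemma phiS_id (T : TA A ι) (i : ι) (U : P A ι) : phiS T i i U = U :=
  Pext fun a => by rw [mem_phiS, T.s_id]

lemma cB_le (T : TA A ι) (i : ι) (S : Set (P A ι)) : S ≤ cB T i S :=
  fun V hV => Or.inl ⟨V, hV, fun a ha => V.down.upward ha (T.f1 i a)⟩

def Ebig (T : TA A ι) : TEA (Set (P A ι)) ι where
  c := cB T
  s := sB T
  t := tB T
  d := dB T
  s_id := fun i x => by
    ext U
    show phiS T i i U ∈ x ↔ U ∈ x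
    rw [phiS_id]
  t_id := fun i x => by
    ext U
    show phiT T i i U ∈ x ↔ U ∈ x
    rw [show phiT T i i U = U from Pext fun a => by rw [mem_phiT, T.t_id]]
  d_id := fun i => by
    ext U
    simp only [dB, Set.mem_range, Set.top_eq_univ, Set.mem_univ, iff_true]
    exact ⟨U, phiS_id T i U⟩
  t_symm := fun i j x => by
    ext U
    show phiT T i j U ∈ x ↔ phiT T j i U ∈ x
    rw [show phiT T i j U = phiT T j i U from Pext fun a => by
      rw [mem_phiT, mem_phiT, T.t_symm]]
  fe1 := fun i x => cB_le T i x
  fe2 := fun i x y => by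
    ext V
    constructor
    · rintro (⟨U, hU | hU, hP⟩ | hz)
      exacts [Or.inl (Or.inl ⟨U, hU, hP⟩), Or.inr (Or.inl ⟨U, hU, hP⟩),
        Or.inl (Or.inr hz)]
    · rintro ((⟨U, hU, hP⟩ | hz) | (⟨U, hU, hP⟩ | hz))
      exacts [Or.inl ⟨U, Or.inl hU, hP⟩, Or.inr hz, Or.inl ⟨U, Or.inr hU, hP⟩,
        Or.inr hz]
  fe3 := fun i j x => by
    ext V
    show phiS T i j V ∈ cB T i x ↔ V ∈ cB T i x
    simp only [cB, Set.mem_setOf_eq, mem_phiS, T.f3]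
  fe4 := fun i j x hij => by
    refine le_antisymm ?_ (cB_le T i (sB T i j x))
    rintro V (⟨U, hU, hP⟩ | hz)
    · show phiS T i j V ∈ x
      have hUV : phiS T i j V = phiS T i j U := Pext fun a => by
        rw [mem_phiS, mem_phiS]
        constructor
        · intro hV'
          by_contra hU'
          have h1 : (T.s i j a)ᶜ ∈ U.down.car := (U.down.compl_iff _).mpr hU'
          have h2 : T.s i j (aᶜ) ∈ U.down.car := by rw [T.f6s_compl]; exact h1
          have h3 := hP _ h2
          rw [T.f4 i j _ hij, T.f6s_compl] at h3
          exact (V.down.compl_iff _).mp h3 hV'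
        · intro hU'
          have h3 := hP _ hU'
          rwa [T.f4 i j a hij] at h3
      rw [hUV]
      exact hU
    · rw [c_bot T hij] at hz
      exact absurd hz V.down.bot_not_mem
  fe5 := fun i j k m x hik him hjk hjm => by
    ext U
    show phiS T k m (phiS T i j U) ∈ x ↔ phiS T i j (phiS T k m U) ∈ x
    rw [show phiS T k m (phiS T i j U) = phiS T i j (phiS T k m U) from
      Pext fun a => by
        rw [mem_phiS, mem_phiS, mem_phiS, mem_phiS,
          T.f5 i j k m a hik him hjk hjm]]
  fe6s_sup := fun i j x y => rfl
  fe6s_compl := fun i j x => rfl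
  fe6t_sup := fun i j x y => rfl
  fe6t_compl := fun i j x => rfl
  fe7 := fun i j x => by
    ext U
    show phiT T i j (phiT T i j U) ∈ x ↔ U ∈ x
    rw [show phiT T i j (phiT T i j U) = U from Pext fun a => by
      rw [mem_phiT, mem_phiT, T.f7]]
  fe8 := fun i j k x hij hjk hik => by
    ext U
    show phiT T i k (phiT T i j U) ∈ x ↔ phiT T i j (phiT T j k U) ∈ x
    rw [show phiT T i k (phiT T i j U) = phiT T i j (phiT T j k U) from
      Pext fun a => by
        rw [mem_phiT, mem_phiT, mem_phiT, mem_phiT, T.f8 i j k a hij hjk hik]]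
  fe9 := fun i j x => by
    ext U
    show phiS T i j (phiT T i j U) ∈ x ↔ phiS T j i U ∈ x
    rw [show phiS T i j (phiT T i j U) = phiS T j i U from Pext fun a => by
      rw [mem_phiS, mem_phiT, mem_phiS, T.f9]]
  fe10 := fun i j => by
    ext U
    simp only [Set.top_eq_univ, Set.mem_univ, iff_true]
    exact ⟨U, rfl⟩
  fe11 := fun i j x U hU => by
    obtain ⟨hUx, V, hV⟩ := hU
    show phiS T i j U ∈ x
    have h2 : phiS T i j U = U := by
      rw [← hV]
      exact Pext fun a => by rw [mem_phiS, mem_phiS, mem_phiS, s_idem]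
    rw [h2]
    exact hUx

lemma d_eq_sInf (T : TA A ι) (i j : ι) :
    dB T i j = sInf {y : Set (P A ι) | sB T i j y = ⊤} := by
  refine le_antisymm (le_sInf ?_) (sInf_le ?_)
  · rintro y hy U ⟨V, rfl⟩
    have : V ∈ sB T i j y := by rw [hy]; exact Set.mem_univ V
    exact this
  · exact (Ebig T).fe10 i j

lemma eB_inj : Function.Injective (eB (A := A) (ι := ι)) := by
  have sep : ∀ x : A, x ≠ ⊥ → ∃ U : Ultra A, x ∈ U.car := by
    intro x hx
    obtain ⟨U, hU, _⟩ := ultra_exists {z : A | z = ⊥} rfl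
      (fun p q hpq hq => le_bot_iff.mp (le_of_le_of_eq hpq hq))
      (fun p q hp hq => by
        simp only [Set.mem_setOf_eq] at *
        rw [hp, hq, sup_idem])
      x hx
    exact ⟨U, hU⟩
  have key : ∀ p q : A, eB (ι := ι) p = eB q → ¬ p ≤ q → False := by
    intro p q hpq hle
    have hne : p ⊓ qᶜ ≠ ⊥ := by
      intro h0
      exact hle (sdiff_eq_bot_iff.mp (by rwa [sdiff_eq]))
    obtain ⟨U, hU⟩ := sep _ hne
    have hp : p ∈ U.car := U.upward hU inf_le_left
    have hqc : qᶜ ∈ U.car := U.upward hU inf_le_right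
    have hq : q ∈ U.car := by
      have h1 : (⟨U⟩ : P A ι) ∈ eB (ι := ι) p := hp
      rw [hpq] at h1
      exact h1
    exact (U.compl_iff q).mp hqc hq
  intro x y hxy
  by_contra hne
  by_cases hle : x ≤ y
  · exact key y x hxy.symm (fun h => hne (le_antisymm hle h))
  · exact key x y hxy hle

lemma eB_sup (x y : A) : eB (ι := ι) (x ⊔ y) = eB x ⊔ eB y := by
  ext U
  exact U.down.sup_iff x y

lemma eB_compl (x : A) : eB (ι := ι) (xᶜ) = (eB x)ᶜ := by
  ext U
  exact U.down.compl_iff x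

lemma eB_s (T : TA A ι) (i j : ι) (x : A) : eB (T.s i j x) = sB T i j (eB x) :=
  rfl

lemma eB_t (T : TA A ι) (i j : ι) (x : A) : eB (T.t i j x) = tB T i j (eB x) :=
  rfl

lemma eB_c (T : TA A ι) (i : ι) (x : A) : eB (T.c i x) = cB T i (eB x) := by
  ext V
  constructor
  · intro hV
    by_cases hx : x = ⊥
    · subst hx
      exact Or.inr hV
    · obtain ⟨U, hxU, hUI⟩ := ultra_exists
        {b : A | b = ⊥ ∨ T.c i b ∉ V.down.car} (Or.inl rfl)
        (fun p q hpq hq => by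
          rcases hq with h | h
          · exact Or.inl (le_bot_iff.mp (le_of_le_of_eq hpq h))
          · exact Or.inr fun hcp => h (V.down.upward hcp (c_mono T i hpq)))
        (fun p q hp hq => by
          rcases hp with rfl | hp
          · rcases hq with rfl | hq
            · exact Or.inl (by rw [sup_idem])
            · rw [bot_sup_eq]; exact Or.inr hq
          · rcases hq with rfl | hq
            · rw [sup_bot_eq]; exact Or.inr hp
            · refine Or.inr fun hc => ?_
              rw [T.f2] at hc
              rcases (V.down.sup_iff _ _).mp hc with h | h
              exacts [hp h, hq h])
        x (by rintro (h | h); exacts [hx h, h hV])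
      refine Or.inl ⟨⟨U⟩, hxU, fun a ha => ?_⟩
      have h1 := hUI a ha
      simp only [Set.mem_setOf_eq, not_or] at h1
      exact not_not.mp h1.2
  · rintro (⟨U, hU, hP⟩ | hz)
    · exact hP x hU
    · exact V.down.upward hz (c_mono T i bot_le)

end Stmt14Aux



/-- Every transposition algebra `TA_α` embeds into the
transposition reduct of a transposition equality algebra `TEA_α`: there is a
complete atomic Boolean algebra `B` carrying a `TEA` structure whose
diagonals are `d i j = sInf {y | s^i_j y = ⊤}`, and an injective Boolean
embedding of `A` into `B` preserving cylindrifications, substitutions and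
transpositions (i.e. into the reduct of `B` omitting the diagonals). -/
theorem stmt14 {A : Type u} [BooleanAlgebra A] {ι : Type v} (T : TA A ι) :
    ∃ (B : Type (max u v)) (_ : CompleteBooleanAlgebra B) (_ : IsAtomic B)
      (E : TEA B ι),
      (∀ i j : ι, E.d i j = sInf {y : B | E.s i j y = ⊤}) ∧
      ∃ f : A → B, Function.Injective f ∧
        (∀ x y : A, f (x ⊔ y) = f x ⊔ f y) ∧
        (∀ x : A, f (xᶜ) = (f x)ᶜ) ∧
        (∀ (i : ι) (x : A), f (T.c i x) = E.c i (f x)) ∧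
        (∀ (i j : ι) (x : A), f (T.s i j x) = E.s i j (f x)) ∧
        (∀ (i j : ι) (x : A), f (T.t i j x) = E.t i j (f x)) := by
  classical
  open Stmt14Aux in
  refine ⟨Set (P A ι), inferInstance, inferInstance, Ebig T, d_eq_sInf T,
    eB, eB_inj, eB_sup, eB_compl, eB_c T, eB_s T, eB_t T⟩
end

section
/- Let V ⊆ ᵅU satisfy S^i_j V = V for all i,j < α, i.e., for every y ∈ V and i,j there exists u with y^i_u ∈ V and y^i_{y_j} ∈ V (the class D_α condition). Then the powerset relativized cylindric set algebra on V satisfies axioms (C0)–(C3), (C4)*, (C5)–(C7) and the merry-go-round identities, i.e., it is a partial transposition algebra PTA_α. -/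
open Function Set

variable {α U : Type*} [DecidableEq α]

/-- Relativized cylindrification on subsets of `V`. -/
def Cyl (V : Set (α → U)) (i : α) (X : Set (α → U)) : Set (α → U) :=
  {y | y ∈ V ∧ ∃ u, Function.update y i u ∈ X}

/-- Relativized diagonal element. -/
def Diag (V : Set (α → U)) (i j : α) : Set (α → U) := {y | y ∈ V ∧ y i = y j}

/-- The substitution operator `S^i_j X = C_i (D_{ij} ∩ X)`. -/
def Srel (V : Set (α → U)) (i j : α) (X : Set (α → U)) : Set (α → U) :=
  Cyl V i (Diag V i j ∩ X)

lemma mem_srel {V X : Set (α → U)} (hX : X ⊆ V) {i j : α} (hij : i ≠ j) (y : α → U) :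
    y ∈ Srel V i j X ↔ y ∈ V ∧ Function.update y i (y j) ∈ X := by
  constructor
  · rintro ⟨hy, u, ⟨⟨hu, hd⟩, hx⟩⟩
    have : u = y j := by simpa [Function.update_of_ne hij.symm] using hd
    subst this; exact ⟨hy, hx⟩
  · rintro ⟨hy, hx⟩
    exact ⟨hy, y j, ⟨⟨hX hx, by simp [Function.update_of_ne hij.symm]⟩, hx⟩⟩

lemma srel_self {V X : Set (α → U)} (hX : X ⊆ V) (i : α) : Srel V i i X = Cyl V i X := by
  ext y
  constructor
  · rintro ⟨hy, u, ⟨_, hx⟩⟩; exact ⟨hy, u, hx⟩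
  · rintro ⟨hy, u, hx⟩; exact ⟨hy, u, ⟨⟨hX hx, rfl⟩, hx⟩⟩

lemma srel_subset (V : Set (α → U)) (i j : α) (X : Set (α → U)) : Srel V i j X ⊆ V :=
  fun _ h => h.1

lemma cyl_subset (V : Set (α → U)) (i : α) (X : Set (α → U)) : Cyl V i X ⊆ V :=
  fun _ h => h.1

lemma mgr_distinct (V : Set (α → U))
    (hV : ∀ y ∈ V, ∀ i j : α, Function.update y i (y j) ∈ V)
    (X : Set (α → U)) (hX : X ⊆ V) (i j k m : α)
    (hij : i ≠ j) (hjm : j ≠ m) (hki : k ≠ i) (hkj : k ≠ j) (hkm : k ≠ m)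
    (hmi : m ≠ i) (hmj : m ≠ j) :
    Srel V k i (Srel V i j (Srel V j m (Srel V m k (Cyl V k X)))) =
      {y | y ∈ V ∧ ∃ u, Function.update (Function.update (Function.update
        (Function.update y i (y j)) j (y m)) m (y i)) k u ∈ X} := by
  ext y
  constructor
  · intro h
    rw [mem_srel (srel_subset _ _ _ _) hki] at h
    obtain ⟨hy, h⟩ := h
    rw [mem_srel (srel_subset _ _ _ _) hij] at h
    obtain ⟨-, h⟩ := h
    rw [mem_srel (srel_subset _ _ _ _) hjm] at h
    obtain ⟨-, h⟩ := h
    rw [mem_srel (cyl_subset _ _ _) (Ne.symm hkm)] at h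
    obtain ⟨-, -, u, hu⟩ := h
    refine ⟨hy, u, Set.mem_of_eq_of_mem ?_ hu⟩
    funext a
    simp only [Function.update_apply]
    split_ifs <;> simp_all
  · rintro ⟨hy, u, hz⟩
    have hzV : Function.update (Function.update (Function.update
        (Function.update y i (y j)) j (y m)) m (y i)) k u ∈ V := hX hz
    have hc4 : Function.update (Function.update (Function.update
        (Function.update y k (y i)) i (y j)) j (y m)) m (y i) ∈ V := by
      refine Set.mem_of_eq_of_mem ?_ (hV _ hzV k m)
      funext a
      simp only [Function.update_apply]
      split_ifs <;> simp_all
    have hc3 : Function.update (Function.update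
        (Function.update y k (y i)) i (y j)) j (y m) ∈ V := by
      refine Set.mem_of_eq_of_mem ?_ (hV _ hc4 m j)
      funext a
      simp only [Function.update_apply]
      split_ifs <;> simp_all
    have hc2 : Function.update (Function.update y k (y i)) i (y j) ∈ V := by
      refine Set.mem_of_eq_of_mem ?_ (hV _ hc3 j i)
      funext a
      simp only [Function.update_apply]
      split_ifs <;> simp_all
    have hc1 : Function.update y k (y i) ∈ V := by
      refine Set.mem_of_eq_of_mem ?_ (hV _ hc2 i k)
      funext a
      simp only [Function.update_apply]
      split_ifs <;> simp_all
    refine (mem_srel (srel_subset _ _ _ _) hki _).mpr ⟨hy, ?_⟩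
    refine (mem_srel (srel_subset _ _ _ _) hij _).mpr ⟨hc1, ?_⟩
    rw [Function.update_of_ne hkj.symm]
    refine (mem_srel (srel_subset _ _ _ _) hjm _).mpr ⟨hc2, ?_⟩
    rw [Function.update_of_ne hmi, Function.update_of_ne hkm.symm]
    refine (mem_srel (cyl_subset _ _ _) (Ne.symm hkm) _).mpr ⟨hc3, ?_⟩
    rw [Function.update_of_ne hkj, Function.update_of_ne hki, Function.update_self]
    exact ⟨hc4, u, Set.mem_of_eq_of_mem (by
      funext a
      simp only [Function.update_apply]
      split_ifs <;> simp_all) hz⟩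

lemma mgr_collapsedL (V : Set (α → U))
    (hV : ∀ y ∈ V, ∀ i j : α, Function.update y i (y j) ∈ V)
    (X : Set (α → U)) (hX : X ⊆ V) (i k m : α)
    (hki : k ≠ i) (hkm : k ≠ m) (hmi : m ≠ i) :
    Srel V k i (Cyl V i (Srel V i m (Srel V m k (Cyl V k X)))) =
      {y | y ∈ V ∧ ∃ u, Function.update (Function.update
        (Function.update y i (y m)) m (y i)) k u ∈ X} := by
  ext y
  constructor
  · intro h
    rw [mem_srel (cyl_subset _ _ _) hki] at h
    obtain ⟨hy, -, v, h⟩ := h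
    rw [mem_srel (srel_subset _ _ _ _) hmi.symm] at h
    obtain ⟨-, h⟩ := h
    rw [Function.update_idem, Function.update_of_ne hmi, Function.update_of_ne hkm.symm] at h
    rw [mem_srel (cyl_subset _ _ _) (Ne.symm hkm)] at h
    obtain ⟨-, -, u, hu⟩ := h
    refine ⟨hy, u, Set.mem_of_eq_of_mem ?_ hu⟩
    funext a
    simp only [Function.update_apply]
    split_ifs <;> simp_all
  · rintro ⟨hy, u, hz⟩
    have hzV : Function.update (Function.update
        (Function.update y i (y m)) m (y i)) k u ∈ V := hX hz
    have he4 : Function.update (Function.update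
        (Function.update y k (y i)) i (y m)) m (y i) ∈ V := by
      refine Set.mem_of_eq_of_mem ?_ (hV _ hzV k m)
      funext a
      simp only [Function.update_apply]
      split_ifs <;> simp_all
    have he3 : Function.update (Function.update y k (y i)) i (y m) ∈ V := by
      refine Set.mem_of_eq_of_mem ?_ (hV _ he4 m i)
      funext a
      simp only [Function.update_apply]
      split_ifs <;> simp_all
    have hc1 : Function.update y k (y i) ∈ V := by
      refine Set.mem_of_eq_of_mem ?_ (hV _ he3 i k)
      funext a
      simp only [Function.update_apply]
      split_ifs <;> simp_all
    refine (mem_srel (cyl_subset _ _ _) hki _).mpr ⟨hy, ?_⟩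
    refine ⟨hc1, Function.update y k (y i) i, ?_⟩
    rw [Function.update_eq_self]
    refine (mem_srel (srel_subset _ _ _ _) hmi.symm _).mpr ⟨hc1, ?_⟩
    rw [Function.update_of_ne hkm.symm]
    refine (mem_srel (cyl_subset _ _ _) (Ne.symm hkm) _).mpr ⟨he3, ?_⟩
    rw [Function.update_of_ne hki, Function.update_self]
    exact ⟨he4, u, Set.mem_of_eq_of_mem (by
      funext a
      simp only [Function.update_apply]
      split_ifs <;> simp_all) hz⟩

lemma mgr_collapsedR (V : Set (α → U))
    (hV : ∀ y ∈ V, ∀ i j : α, Function.update y i (y j) ∈ V)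
    (X : Set (α → U)) (hX : X ⊆ V) (i k m : α)
    (hki : k ≠ i) (hkm : k ≠ m) (hmi : m ≠ i) :
    Srel V k m (Srel V m i (Cyl V i (Srel V i k (Cyl V k X)))) =
      {y | y ∈ V ∧ ∃ u, Function.update (Function.update
        (Function.update y i (y m)) m (y i)) k u ∈ X} := by
  ext y
  constructor
  · intro h
    rw [mem_srel (srel_subset _ _ _ _) hkm] at h
    obtain ⟨hy, h⟩ := h
    rw [mem_srel (cyl_subset _ _ _) hmi] at h
    obtain ⟨-, h⟩ := h
    rw [Function.update_of_ne hki.symm] at h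
    obtain ⟨-, v, h⟩ := h
    rw [mem_srel (cyl_subset _ _ _) hki.symm] at h
    obtain ⟨-, h⟩ := h
    rw [Function.update_idem, Function.update_of_ne hki, Function.update_of_ne hkm,
      Function.update_self] at h
    obtain ⟨-, u, hu⟩ := h
    refine ⟨hy, u, Set.mem_of_eq_of_mem ?_ hu⟩
    funext a
    simp only [Function.update_apply]
    split_ifs <;> simp_all
  · rintro ⟨hy, u, hz⟩
    have hzV : Function.update (Function.update
        (Function.update y i (y m)) m (y i)) k u ∈ V := hX hz
    have hw4 : Function.update (Function.update
        (Function.update y k (y m)) m (y i)) i (y m) ∈ V := by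
      refine Set.mem_of_eq_of_mem ?_ (hV _ hzV k i)
      funext a
      simp only [Function.update_apply]
      split_ifs <;> simp_all
    have hw2 : Function.update (Function.update y k (y m)) m (y i) ∈ V := by
      refine Set.mem_of_eq_of_mem ?_ (hV _ hw4 i m)
      funext a
      simp only [Function.update_apply]
      split_ifs <;> simp_all
    have hw1 : Function.update y k (y m) ∈ V := by
      refine Set.mem_of_eq_of_mem ?_ (hV _ hw2 m k)
      funext a
      simp only [Function.update_apply]
      split_ifs <;> simp_all
    refine (mem_srel (srel_subset _ _ _ _) hkm _).mpr ⟨hy, ?_⟩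
    refine (mem_srel (cyl_subset _ _ _) hmi _).mpr ⟨hw1, ?_⟩
    rw [Function.update_of_ne hki.symm]
    refine ⟨hw2, Function.update (Function.update y k (y m)) m (y i) i, ?_⟩
    rw [Function.update_eq_self]
    refine (mem_srel (cyl_subset _ _ _) hki.symm _).mpr ⟨hw2, ?_⟩
    rw [Function.update_of_ne hkm, Function.update_self]
    exact ⟨hw4, u, Set.mem_of_eq_of_mem (by
      funext a
      simp only [Function.update_apply]
      split_ifs <;> simp_all) hz⟩

/-- Let `V ⊆ ᵅU` satisfy the `D_α` condition `S^i_j V = V`,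
i.e. for every `y ∈ V` and `i, j`, the sequence `y^i_{y j}` is in `V`.  Then
the powerset relativized cylindric set algebra on `V` satisfies axioms
(C0)–(C3), (C4)*, (C5)–(C7) and the merry-go-round identities: it is a
partial transposition algebra `PTA_α`. -/
theorem stmt16 (V : Set (α → U))
    (hV : ∀ y ∈ V, ∀ i j : α, Function.update y i (y j) ∈ V) :
    ∀ X Y : Set (α → U), X ⊆ V → Y ⊆ V → ∀ i j k m : α,
      -- (C0)–(C3): additive closure operators, closed under complement
      (X ⊆ Cyl V i X) ∧
      (Cyl V i (X ∪ Y) = Cyl V i X ∪ Cyl V i Y) ∧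
      (Cyl V i (∅ : Set (α → U)) = ∅) ∧
      (Cyl V i (Cyl V i X) = Cyl V i X) ∧
      (Cyl V i (X ∩ Cyl V i Y) = Cyl V i X ∩ Cyl V i Y) ∧
      -- (C4)*
      (k ≠ i → k ≠ j → Diag V j k ∩ Cyl V j (Cyl V i X) ⊆ Cyl V i (Cyl V j X)) ∧
      -- (C5)
      (Diag V i i = V) ∧
      -- (C6)
      (k ≠ i → k ≠ j → Diag V i j = Cyl V k (Diag V i k ∩ Diag V k j)) ∧
      -- (C7)
      (i ≠ j → Diag V i j ∩ Cyl V i (Diag V i j ∩ X) ⊆ X) ∧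
      -- (MGR)
      (k ≠ i → k ≠ j → k ≠ m → m ≠ i → m ≠ j →
        Srel V k i (Srel V i j (Srel V j m (Srel V m k (Cyl V k X)))) =
          Srel V k m (Srel V m i (Srel V i j (Srel V j k (Cyl V k X))))) := by
  intro X Y hX hY i j k m
  refine ⟨?_, ?_, ?_, ?_, ?_, ?_, ?_, ?_, ?_, ?_⟩
  · intro y hy; exact ⟨hX hy, y i, by simpa [Function.update_eq_self] using hy⟩
  · ext y; simp only [Cyl, mem_setOf_eq, Set.mem_union, exists_or]; tauto
  · ext y; simp [Cyl]
  · ext y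
    constructor
    · rintro ⟨hy, u, _, v, hv⟩
      exact ⟨hy, v, by simpa [Function.update_idem] using hv⟩
    · rintro ⟨hy, u, hu⟩
      exact ⟨hy, u, hX hu, u, by simpa [Function.update_idem] using hu⟩
  · ext y
    constructor
    · rintro ⟨hy, u, hu, _, v, hv⟩
      exact ⟨⟨hy, u, hu⟩, hy, v, by simpa [Function.update_idem] using hv⟩
    · rintro ⟨⟨hy, u, hu⟩, _, v, hv⟩
      exact ⟨hy, u, hu, hX hu, v, by simpa [Function.update_idem] using hv⟩
  · intro hki hkj y ⟨⟨hy, hd⟩, _, u, hu, v, hv⟩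
    by_cases hij : i = j
    · subst hij
      have h2 : Function.update y i v ∈ X := by simpa [Function.update_idem] using hv
      exact ⟨hy, v, hX h2, v, by simpa [Function.update_idem] using h2⟩
    · set z := Function.update (Function.update y j u) i v with hz
      have hzX : z ∈ X := hv
      have hzV : z ∈ V := hX hzX
      have hw : Function.update z j (z k) = Function.update y i v := by
        funext a
        rcases eq_or_ne a j with rfl | haj
        · simp [hz, Function.update_of_ne hij, Function.update_of_ne hkj,
            Function.update_of_ne (Ne.symm hij), Function.update_of_ne hki, hd.symm]
        · rcases eq_or_ne a i with rfl | hai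
          · simp [hz, Function.update_of_ne haj]
          · simp [hz, Function.update_of_ne haj, Function.update_of_ne hai]
      have hwV : Function.update y i v ∈ V := by rw [← hw]; exact hV z hzV j k
      refine ⟨hy, v, hwV, u, ?_⟩
      have : Function.update (Function.update y i v) j u = z := by
        funext a
        rcases eq_or_ne a j with rfl | haj
        · simp [hz, Function.update_of_ne (Ne.symm hij)]
        · rcases eq_or_ne a i with rfl | hai
          · simp [hz, Function.update_of_ne haj]
          · simp [hz, Function.update_of_ne haj, Function.update_of_ne hai]
      rw [this]; exact hzX
  · ext y; simp [Diag]
  · intro hki hkj; ext y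
    constructor
    · rintro ⟨hy, hd⟩
      refine ⟨hy, y i, ⟨hV y hy k i, ?_⟩, ⟨hV y hy k i, ?_⟩⟩
      · simp [Function.update_of_ne (Ne.symm hki)]
      · simp [Function.update_of_ne (Ne.symm hki), Function.update_of_ne (Ne.symm hkj), hd]
    · rintro ⟨hy, u, ⟨⟨_, h1⟩, ⟨_, h2⟩⟩⟩
      refine ⟨hy, ?_⟩
      have e1 : y i = u := by simpa [Function.update_of_ne (Ne.symm hki)] using h1
      have e2 : u = y j := by simpa [Function.update_of_ne (Ne.symm hkj)] using h2
      exact e1.trans e2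
  · intro hij y ⟨⟨hy, hd⟩, _, u, ⟨⟨_, hd2⟩, hx⟩⟩
    have : u = y j := by simpa [Function.update_of_ne hij.symm] using hd2
    subst this
    rwa [← hd, Function.update_eq_self] at hx
  · intro hki hkj hkm hmi hmj
    by_cases hij : i = j
    · subst hij
      rw [srel_self (srel_subset _ _ _ _), srel_self (srel_subset _ _ _ _),
        mgr_collapsedL V hV X hX i k m hki hkm hmi,
        mgr_collapsedR V hV X hX i k m hki hkm hmi]
    · rw [mgr_distinct V hV X hX i j k m hij hmj.symm hki hkj hkm hmi hmj,
        mgr_distinct V hV X hX m i k j hmi hij hkm hki hkj hmj.symm (Ne.symm hij)]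
      ext y
      constructor
      · rintro ⟨hy, u, h⟩
        refine ⟨hy, u, Set.mem_of_eq_of_mem ?_ h⟩
        funext a
        simp only [Function.update_apply]
        split_ifs <;> simp_all
      · rintro ⟨hy, u, h⟩
        refine ⟨hy, u, Set.mem_of_eq_of_mem ?_ h⟩
        funext a
        simp only [Function.update_apply]
        split_ifs <;> simp_all
end
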